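/- Let A and B be strictly positive definite m×m complex matrices. Then for every m×m matrix C, the quantity tr[C* ((A,B)# C)] is a nonnegative real number, and it equals 0 if and only if C = 0. -/

import Mathlib

open MeasureTheory Matrix
open scoped ComplexOrder

attribute [local instance] Matrix.frobeniusNormedAddCommGroup Matrix.frobeniusNormedSpace

variable {m : ℕ}

/-- `(A,B)#C = ∫₀¹ A^{1-s} C B^s ds`, with powers by functional calculus. -/
noncomputable def matSharp (A B C : Matrix (Fin m) (Fin m) ℂ) : Matrix (Fin m) (Fin m) ℂ :=
  ∫ s in (0:ℝ)..1,
    cfc (fun t : ℝ => t ^ (1 - s)) A * C * cfc (fun t : ℝ => t ^ s) B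

/-- `(A,B)♯̂C = ∫₀^∞ (A+xI)⁻¹ C (B+xI)⁻¹ dx`. -/
noncomputable def matSharpHat (A B C : Matrix (Fin m) (Fin m) ℂ) : Matrix (Fin m) (Fin m) ℂ :=
  ∫ x in Set.Ioi (0:ℝ), (A + (x : ℂ) • 1)⁻¹ * C * (B + (x : ℂ) • 1)⁻¹

lemma cont_rpow_base {c : ℝ} (hc : 0 < c) : Continuous fun s : ℝ => c ^ s := by
  have h : (fun s : ℝ => c ^ s) = fun s => Real.exp (Real.log c * s) :=
    funext fun s => Real.rpow_def_of_pos hc s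
  rw [h]; fun_prop

lemma diagonal_eq_sum_smul (d : Fin m → ℂ) :
    Matrix.diagonal d = ∑ i, d i • Matrix.single i i (1:ℂ) := by
  ext p q
  simp only [Matrix.sum_apply, Matrix.smul_apply, Matrix.single, Matrix.of_apply,
    smul_eq_mul, mul_ite, mul_one, mul_zero, Matrix.diagonal_apply]
  rcases eq_or_ne p q with rfl | h
  · simp
  · simp [h, fun i => show ¬(i = p ∧ i = q) from fun ⟨h1, h2⟩ => h (h1 ▸ h2 ▸ rfl)]

lemma trace_conj_single (N : Matrix (Fin m) (Fin m) ℂ) (i j : Fin m) :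
    (Nᴴ * Matrix.single i i 1 * N * Matrix.single j j 1).trace
      = (starRingEnd ℂ) (N i j) * N i j := by
  simp [Matrix.trace, Matrix.diag, Matrix.mul_apply, Matrix.single,
    Matrix.conjTranspose_apply, ite_mul, mul_ite, Finset.sum_ite_eq, Finset.sum_ite_eq',
    ite_and]

lemma sandwich_decomp (U V C : Matrix (Fin m) (Fin m) ℂ) (c e : Fin m → ℂ) :
    U * Matrix.diagonal c * star U * C * (V * Matrix.diagonal e * star V)
      = ∑ i, ∑ j, (c i * e j) •
        (U * Matrix.single i i 1 * star U * C *
          (V * Matrix.single j j 1 * star V)) := by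
  rw [diagonal_eq_sum_smul, diagonal_eq_sum_smul]
  simp only [Matrix.mul_sum, Matrix.sum_mul, Matrix.mul_smul, Matrix.smul_mul,
    Finset.smul_sum, smul_smul]
  rw [Finset.sum_comm]
  exact Finset.sum_congr rfl fun i _ => Finset.sum_congr rfl fun j _ => by rw [mul_comm]

/-- For strictly positive definite `A`, `B` and any `C`, `tr[C* ((A,B)# C)]` is a
nonnegative real number, vanishing iff `C = 0`. -/
theorem trace_sharp_nonneg (A B : Matrix (Fin m) (Fin m) ℂ)
    (hA : A.PosDef) (hB : B.PosDef) (C : Matrix (Fin m) (Fin m) ℂ) :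
    (Cᴴ * matSharp A B C).trace.im = 0 ∧ 0 ≤ (Cᴴ * matSharp A B C).trace.re ∧
      ((Cᴴ * matSharp A B C).trace = 0 ↔ C = 0) := by
  classical
  have hAh : A.IsHermitian := hA.1
  have hBh : B.IsHermitian := hB.1
  set U : Matrix (Fin m) (Fin m) ℂ := (hAh.eigenvectorUnitary : Matrix (Fin m) (Fin m) ℂ) with hUdef
  set V : Matrix (Fin m) (Fin m) ℂ := (hBh.eigenvectorUnitary : Matrix (Fin m) (Fin m) ℂ) with hVdef
  set a : Fin m → ℝ := hAh.eigenvalues with hadef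
  set b : Fin m → ℝ := hBh.eigenvalues with hbdef
  have ha : ∀ i, 0 < a i := fun i => hA.eigenvalues_pos i
  have hb : ∀ j, 0 < b j := fun j => hB.eigenvalues_pos j
  have hUU : U * star U = 1 := (Matrix.mem_unitaryGroup_iff).mp hAh.eigenvectorUnitary.2
  have hVV : V * star V = 1 := (Matrix.mem_unitaryGroup_iff).mp hBh.eigenvectorUnitary.2
  have hVV' : star V * V = 1 := (Matrix.mem_unitaryGroup_iff').mp hBh.eigenvectorUnitary.2
  set K : Fin m → Fin m → Matrix (Fin m) (Fin m) ℂ := fun i j =>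
    U * Matrix.single i i 1 * star U * C *
      (V * Matrix.single j j 1 * star V) with hKdef
  set w : Fin m → Fin m → ℝ := fun i j => ∫ s in (0:ℝ)..1, a i ^ (1 - s) * b j ^ s with hwdef
  set M : Matrix (Fin m) (Fin m) ℂ := star U * C * V with hMdef
  have hintegrand : ∀ s : ℝ,
      cfc (fun t : ℝ => t ^ (1 - s)) A * C * cfc (fun t : ℝ => t ^ s) B
        = ∑ i, ∑ j, ((a i ^ (1 - s) * b j ^ s : ℝ) : ℂ) • K i j := by
    intro s
    rw [hAh.cfc_eq, hBh.cfc_eq]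
    simp only [Matrix.IsHermitian.cfc, Unitary.conjStarAlgAut_apply]
    have h1 : (RCLike.ofReal ∘ (fun t : ℝ => t ^ (1 - s)) ∘ hAh.eigenvalues : Fin m → ℂ)
        = fun i => ((a i ^ (1 - s) : ℝ) : ℂ) := rfl
    have h2 : (RCLike.ofReal ∘ (fun t : ℝ => t ^ s) ∘ hBh.eigenvalues : Fin m → ℂ)
        = fun j => ((b j ^ s : ℝ) : ℂ) := rfl
    rw [h1, h2, ← hUdef, ← hVdef, sandwich_decomp]
    exact Finset.sum_congr rfl fun i _ => Finset.sum_congr rfl fun j _ => by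
      rw [hKdef, Complex.ofReal_mul]
  have hcontr : ∀ i j, Continuous fun s : ℝ => a i ^ (1 - s) * b j ^ s := by
    intro i j
    exact ((cont_rpow_base (ha i)).comp (continuous_const.sub continuous_id)).mul
      (cont_rpow_base (hb j))
  have hcont : ∀ i j, Continuous fun s : ℝ => ((a i ^ (1 - s) * b j ^ s : ℝ) : ℂ) :=
    fun i j => Complex.continuous_ofReal.comp (hcontr i j)
  have hsharp : matSharp A B C = ∑ i, ∑ j, ((w i j : ℝ) : ℂ) • K i j := by
    rw [matSharp,
      intervalIntegral.integral_congr (g := fun s : ℝ =>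
        ∑ i, ∑ j, ((a i ^ (1 - s) * b j ^ s : ℝ) : ℂ) • K i j) (fun s _ => hintegrand s),
      intervalIntegral.integral_finset_sum (f := fun i s => ∑ j, ((a i ^ (1 - s) * b j ^ s : ℝ) : ℂ) • K i j) (fun i _ =>
        ((continuous_finset_sum _ fun j _ => (hcont i j).smul continuous_const).intervalIntegrable
          _ _))]
    refine Finset.sum_congr rfl fun i _ => ?_
    rw [intervalIntegral.integral_finset_sum (f := fun j s => ((a i ^ (1 - s) * b j ^ s : ℝ) : ℂ) • K i j) (fun j _ =>
      (((hcont i j).smul continuous_const).intervalIntegrable _ _))]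
    refine Finset.sum_congr rfl fun j _ => ?_
    rw [intervalIntegral.integral_smul_const, hwdef, intervalIntegral.integral_ofReal]
  have key : ∀ i j, (Cᴴ * K i j).trace = (starRingEnd ℂ) (M i j) * M i j := by
    intro i j
    have h1 : star V * (Cᴴ * K i j) * V
        = Mᴴ * Matrix.single i i 1 * M * Matrix.single j j 1 := by
      rw [hKdef, hMdef]
      simp only [Matrix.conjTranspose_mul, Matrix.star_eq_conjTranspose,
        Matrix.conjTranspose_conjTranspose, Matrix.mul_assoc]
      rw [show Vᴴ * V = 1 from hVV', Matrix.mul_one]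
    have h2 : (star V * (Cᴴ * K i j) * V).trace = (Cᴴ * K i j).trace := by
      rw [Matrix.trace_mul_cycle, ← Matrix.mul_assoc, hVV, Matrix.one_mul]
    rw [← h2, h1, trace_conj_single]
  have htr : (Cᴴ * matSharp A B C).trace
      = ((∑ i, ∑ j, w i j * Complex.normSq (M i j) : ℝ) : ℂ) := by
    rw [hsharp, Matrix.mul_sum, Matrix.trace_sum]
    push_cast
    refine Finset.sum_congr rfl fun i _ => ?_
    rw [Matrix.mul_sum, Matrix.trace_sum]
    refine Finset.sum_congr rfl fun j _ => ?_
    rw [Matrix.mul_smul, Matrix.trace_smul, smul_eq_mul, key i j]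
    rw [Complex.normSq_eq_conj_mul_self]
  have hwpos : ∀ i j, 0 < w i j := by
    intro i j
    refine intervalIntegral.intervalIntegral_pos_of_pos_on
      ((hcontr i j).intervalIntegrable _ _) (fun s _ => ?_) one_pos
    exact mul_pos (Real.rpow_pos_of_pos (ha i) _) (Real.rpow_pos_of_pos (hb j) _)
  have hCM : U * M * star V = C := by
    have e1 : U * (star U * C * V) * star V = U * star U * C * (V * star V) := by
      simp only [Matrix.mul_assoc]
    rw [hMdef, e1, hUU, hVV, Matrix.one_mul, Matrix.mul_one]
  rw [htr]
  have hnn : ∀ i ∈ Finset.univ, (0:ℝ) ≤ ∑ j, w i j * Complex.normSq (M i j) :=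
    fun i _ => Finset.sum_nonneg fun j _ =>
      mul_nonneg (hwpos i j).le (Complex.normSq_nonneg _)
  refine ⟨Complex.ofReal_im _, ?_, ?_⟩
  · rw [Complex.ofReal_re]
    exact Finset.sum_nonneg hnn
  · rw [Complex.ofReal_eq_zero]
    constructor
    · intro hS
      have h0 : ∀ i ∈ Finset.univ, (∑ j, w i j * Complex.normSq (M i j)) = 0 :=
        (Finset.sum_eq_zero_iff_of_nonneg hnn).mp hS
      have hM0 : M = 0 := by
        ext i j
        have h1 : ∀ j ∈ Finset.univ, w i j * Complex.normSq (M i j) = 0 :=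
          (Finset.sum_eq_zero_iff_of_nonneg fun j _ =>
            mul_nonneg (hwpos i j).le (Complex.normSq_nonneg _)).mp (h0 i (Finset.mem_univ i))
        have := h1 j (Finset.mem_univ j)
        have hns : Complex.normSq (M i j) = 0 := by
          rcases mul_eq_zero.mp this with h | h
          · exact absurd h (hwpos i j).ne'
          · exact h
        simpa using Complex.normSq_eq_zero.mp hns
      rw [← hCM, hM0, Matrix.mul_zero, Matrix.zero_mul]
    · intro hC0
      have hM0 : M = 0 := by
        rw [hMdef, hC0, Matrix.mul_zero, Matrix.zero_mul]
      rw [hM0]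
      simp
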